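/- Let q* > 1 and F(p) = h_{q*}^{-1}(h_{q*}(p) + p) − p with h_{q*}(p) = p + |p|^{q*−1}·sgn(p). If 1 < q* ≤ 3, then 0 ≤ F'(p) ≤ 1 for all p ≠ 0; consequently, for all p₁, p₂ ∈ ℝ, ((p₁ − F(p₁)) − (p₂ − F(p₂)))·(F(p₁) − F(p₂)) ≥ 0. -/

import Mathlib

open Real Filter

namespace Stmt17

noncomputable def hh (qs : ℝ) (p : ℝ) : ℝ := p + |p| ^ (qs - 1) * Real.sign p

variable {qs : ℝ}

lemma hh_zero : hh qs 0 = 0 := by simp [hh]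

lemma hh_neg (p : ℝ) : hh qs (-p) = -hh qs p := by
  simp [hh, Real.sign_neg, abs_neg]; ring

lemma hh_of_pos {p : ℝ} (hp : 0 < p) : hh qs p = p + p ^ (qs - 1) := by
  rw [hh, Real.sign_of_pos hp, abs_of_pos hp, mul_one]

lemma phi_mono (hqs : 1 < qs) : Monotone (fun p : ℝ => |p| ^ (qs - 1) * Real.sign p) := by
  have h1 : (0:ℝ) < qs - 1 := by linarith
  intro a b hab
  dsimp only
  rcases lt_trichotomy a 0 with ha | ha | ha
  · rcases lt_trichotomy b 0 with hb | hb | hb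
    · rw [Real.sign_of_neg ha, Real.sign_of_neg hb]
      have : |b| ≤ |a| := by rw [abs_of_neg ha, abs_of_neg hb]; linarith
      have := Real.rpow_le_rpow (abs_nonneg b) this h1.le
      nlinarith [Real.rpow_nonneg (abs_nonneg b) (qs-1)]
    · subst hb; rw [Real.sign_of_neg ha, Real.sign_zero, mul_zero, mul_neg_one, neg_nonpos]
      exact Real.rpow_nonneg (abs_nonneg a) _
    · rw [Real.sign_of_neg ha, Real.sign_of_pos hb]
      nlinarith [Real.rpow_nonneg (abs_nonneg a) (qs-1), Real.rpow_nonneg (abs_nonneg b) (qs-1)]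
  · subst ha
    rcases eq_or_lt_of_le hab with h | hb
    · rw [← h]
    · rw [Real.sign_zero, Real.sign_of_pos hb, mul_zero, mul_one]
      exact Real.rpow_nonneg (abs_nonneg b) _
  · have hb : 0 < b := lt_of_lt_of_le ha hab
    rw [Real.sign_of_pos ha, Real.sign_of_pos hb, mul_one, mul_one]
    exact Real.rpow_le_rpow (abs_nonneg a) (by rw [abs_of_pos ha, abs_of_pos hb]; exact hab) h1.le

lemma hh_strictMono (hqs : 1 < qs) : StrictMono (hh qs) := by
  intro a b hab
  have := phi_mono hqs hab.le
  simp only [hh]; dsimp only at this; linarith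

lemma hh_continuous (hqs : 1 < qs) : Continuous (hh qs) := by
  have h1 : (0:ℝ) < qs - 1 := by linarith
  have habs : Continuous (fun p : ℝ => |p| ^ (qs - 1)) := by
    apply Continuous.rpow_const (continuous_abs)
    intro x; right; exact h1.le
  have hphi : Continuous (fun p : ℝ => |p| ^ (qs - 1) * Real.sign p) := by
    rw [continuous_iff_continuousAt]
    intro x
    rcases lt_trichotomy x 0 with hx | hx | hx
    · have hev : (fun p : ℝ => -(|p| ^ (qs - 1))) =ᶠ[nhds x] (fun p => |p| ^ (qs - 1) * Real.sign p) := by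
        filter_upwards [eventually_lt_nhds hx] with p hp
        rw [Real.sign_of_neg hp]; ring
      exact ContinuousAt.congr (habs.neg.continuousAt) hev
    · subst hx
      have : Filter.Tendsto (fun p : ℝ => |p| ^ (qs - 1) * Real.sign p) (nhds 0) (nhds 0) := by
        apply squeeze_zero_norm (a := fun p : ℝ => |p| ^ (qs - 1))
        · intro p
          rw [Real.norm_eq_abs, abs_mul, abs_of_nonneg (Real.rpow_nonneg (abs_nonneg p) _)]
          rcases lt_trichotomy p 0 with h | h | h
          · rw [Real.sign_of_neg h]; simp
          · subst h; simp [Real.rpow_nonneg]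
          · rw [Real.sign_of_pos h]; simp
        · have h0 := habs.continuousAt (x := 0)
          rw [ContinuousAt] at h0
          simpa [Real.zero_rpow h1.ne'] using h0
      simpa [ContinuousAt] using this
    · have hev : (fun p : ℝ => |p| ^ (qs - 1)) =ᶠ[nhds x] (fun p => |p| ^ (qs - 1) * Real.sign p) := by
        filter_upwards [eventually_gt_nhds hx] with p hp
        rw [Real.sign_of_pos hp]; ring
      exact ContinuousAt.congr (habs.continuousAt) hev
  exact continuous_id.add hphi

lemma hh_surjective (hqs : 1 < qs) : Function.Surjective (hh qs) := by
  apply (hh_continuous hqs).surjective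
  · apply tendsto_atTop_mono' _ _ tendsto_id
    filter_upwards [eventually_ge_atTop (0:ℝ)] with p hp
    have := phi_mono hqs hp
    simp only [abs_zero, Real.sign_zero, mul_zero] at this
    simp only [hh, id_eq]
    linarith
  · apply tendsto_atBot_mono' _ _ tendsto_id
    filter_upwards [eventually_le_atBot (0:ℝ)] with p hp
    have := phi_mono hqs hp
    simp only [abs_zero, Real.sign_zero, mul_zero] at this
    simp only [hh, id_eq]
    linarith

lemma invFun_hh_eq (hqs : 1 < qs) (y : ℝ) :
    Function.invFun (hh qs) y =
      (StrictMono.orderIsoOfSurjective (hh qs) (hh_strictMono hqs) (hh_surjective hqs)).symm y := by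
  apply (hh_strictMono hqs).injective
  rw [Function.invFun_eq (hh_surjective hqs y)]
  exact (StrictMono.orderIsoOfSurjective_self_symm_apply (hh qs) (hh_strictMono hqs)
    (hh_surjective hqs) y).symm

lemma invFun_hh_continuous (hqs : 1 < qs) : Continuous (Function.invFun (hh qs)) := by
  have : Function.invFun (hh qs) =
      ⇑(StrictMono.orderIsoOfSurjective (hh qs) (hh_strictMono hqs) (hh_surjective hqs)).symm := by
    funext y; exact invFun_hh_eq hqs y
  rw [this]
  exact OrderIso.continuous _

noncomputable def gg (qs : ℝ) (p : ℝ) : ℝ := Function.invFun (hh qs) (hh qs p + p)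

lemma hh_gg (hqs : 1 < qs) (p : ℝ) : hh qs (gg qs p) = hh qs p + p :=
  Function.invFun_eq (hh_surjective hqs _)

lemma gg_zero (hqs : 1 < qs) : gg qs 0 = 0 := by
  apply (hh_strictMono hqs).injective
  rw [hh_gg hqs, hh_zero]; ring

lemma gg_neg (hqs : 1 < qs) (p : ℝ) : gg qs (-p) = -gg qs p := by
  apply (hh_strictMono hqs).injective
  rw [hh_gg hqs, hh_neg, hh_neg, hh_gg hqs]; ring

lemma gg_strictMono (hqs : 1 < qs) : StrictMono (gg qs) := by
  intro a b hab
  have h1 : hh qs (gg qs a) < hh qs (gg qs b) := by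
    rw [hh_gg hqs, hh_gg hqs]
    have := hh_strictMono hqs hab
    linarith
  exact (hh_strictMono hqs).lt_iff_lt.mp h1

lemma gg_gt (hqs : 1 < qs) {p : ℝ} (hp : 0 < p) : p < gg qs p := by
  have h1 : hh qs p < hh qs (gg qs p) := by rw [hh_gg hqs]; linarith
  exact (hh_strictMono hqs).lt_iff_lt.mp h1

lemma gg_le_two_mul (hqs : 1 < qs) {p : ℝ} (hp : 0 < p) : gg qs p ≤ 2 * p := by
  have h2p : (0:ℝ) < 2 * p := by linarith
  have h1 : hh qs (gg qs p) ≤ hh qs (2 * p) := by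
    rw [hh_gg hqs, hh_of_pos hp, hh_of_pos h2p]
    have hmul : (2 * p) ^ (qs - 1) = 2 ^ (qs - 1) * p ^ (qs - 1) :=
      Real.mul_rpow (by norm_num) hp.le
    have h2 : (1:ℝ) ≤ 2 ^ (qs - 1) := by
      have := (Real.rpow_le_rpow_left_iff (by norm_num : (1:ℝ) < 2)).mpr
        (by linarith : (0:ℝ) ≤ qs - 1)
      simpa using this
    have hppow : (0:ℝ) ≤ p ^ (qs - 1) := Real.rpow_nonneg hp.le _
    rw [hmul]
    nlinarith
  exact ((hh_strictMono hqs).le_iff_le.mp h1)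

lemma hh_hasDerivAt_pos (hqs : 1 < qs) {p : ℝ} (hp : 0 < p) :
    HasDerivAt (hh qs) (1 + (qs - 1) * p ^ (qs - 2)) p := by
  have hrpow : HasDerivAt (fun x : ℝ => x ^ (qs - 1)) ((qs - 1) * p ^ (qs - 1 - 1)) p :=
    Real.hasDerivAt_rpow_const (Or.inl hp.ne')
  have h : HasDerivAt (fun x : ℝ => x + x ^ (qs - 1)) (1 + (qs - 1) * p ^ (qs - 2)) p := by
    have := (hasDerivAt_id p).add hrpow
    rw [show qs - 1 - 1 = qs - 2 by ring] at this
    exact this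
  apply h.congr_of_eventuallyEq
  filter_upwards [eventually_gt_nhds hp] with x hx
  rw [hh_of_pos hx]

lemma hh_hasDerivAt (hqs : 1 < qs) {p : ℝ} (hp : p ≠ 0) :
    HasDerivAt (hh qs) (1 + (qs - 1) * |p| ^ (qs - 2)) p := by
  rcases hp.lt_or_gt with h | h
  · have hpos : 0 < -p := by linarith
    have h1 := hh_hasDerivAt_pos hqs hpos
    have h2 : HasDerivAt (fun x : ℝ => -hh qs (-x)) (1 + (qs - 1) * (-p) ^ (qs - 2)) p := by
      have := (h1.comp p (hasDerivAt_neg p)).neg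
      exact this.congr_deriv (by ring)
    have h3 : (fun x : ℝ => -hh qs (-x)) = hh qs := by
      funext x; rw [hh_neg, neg_neg]
    rw [h3] at h2
    rwa [abs_of_neg h]
  · have := hh_hasDerivAt_pos hqs h
    rwa [abs_of_pos h]

lemma hh_deriv_pos (hqs : 1 < qs) (p : ℝ) : 0 < 1 + (qs - 1) * |p| ^ (qs - 2) := by
  have := Real.rpow_nonneg (abs_nonneg p) (qs - 2)
  nlinarith

lemma gg_hasDerivAt (hqs : 1 < qs) {p : ℝ} (hp : p ≠ 0) :
    HasDerivAt (gg qs)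
      ((1 + (qs - 1) * |gg qs p| ^ (qs - 2))⁻¹ * (2 + (qs - 1) * |p| ^ (qs - 2))) p := by
  have hggp : gg qs p ≠ 0 := fun h =>
    hp ((gg_strictMono hqs).injective (h.trans (gg_zero hqs).symm))
  have hinv : HasDerivAt (Function.invFun (hh qs))
      ((1 + (qs - 1) * |gg qs p| ^ (qs - 2))⁻¹) (hh qs p + p) := by
    have heq : hh qs p + p = hh qs (gg qs p) := (hh_gg hqs p).symm
    rw [heq]
    have hga : Function.invFun (hh qs) (hh qs (gg qs p)) = gg qs p :=
      Function.leftInverse_invFun (hh_strictMono hqs).injective _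
    apply HasDerivAt.of_local_left_inverse
    · exact (invFun_hh_continuous hqs).continuousAt
    · rw [hga]; exact hh_hasDerivAt hqs hggp
    · exact (hh_deriv_pos hqs _).ne'
    · filter_upwards with y
      exact Function.invFun_eq (hh_surjective hqs y)
  have hpsi : HasDerivAt (fun x : ℝ => hh qs x + x) (2 + (qs - 1) * |p| ^ (qs - 2)) p := by
    have := (hh_hasDerivAt hqs hp).add (hasDerivAt_id' p)
    exact this.congr_deriv (by ring)
  exact (HasDerivAt.comp (x := p) (h := fun x : ℝ => hh qs x + x)
    (h₂ := Function.invFun (hh qs)) hinv hpsi : HasDerivAt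
    ((Function.invFun (hh qs)) ∘ (fun x : ℝ => hh qs x + x)) _ p)

lemma key (hqs1 : 1 < qs) (hqs3 : qs ≤ 3) {a b : ℝ} (ha : 0 < a) (hab : a < b)
    (hb2 : b ≤ 2 * a) (heq : b + b ^ (qs - 1) = 2 * a + a ^ (qs - 1)) :
    (qs - 1) * (b ^ (qs - 2) - a ^ (qs - 2)) ≤ 1 ∧ a ^ (qs - 2) ≤ 2 * b ^ (qs - 2) := by
  have hb0 : 0 < b := lt_trans ha hab
  have hP : 0 < a ^ (qs - 2) := Real.rpow_pos_of_pos ha _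
  have hQ : 0 < b ^ (qs - 2) := Real.rpow_pos_of_pos hb0 _
  constructor
  · rcases le_or_gt qs 2 with h2 | h2
    · have hba : b ^ (qs - 2) ≤ a ^ (qs - 2) :=
        Real.rpow_le_rpow_of_nonpos ha hab.le (by linarith)
      nlinarith
    · -- 2 < qs ≤ 3
      set P := a ^ (qs - 2) with hPdef
      set Q := b ^ (qs - 2) with hQdef
      have haP : a ^ (qs - 1) = P * a := by
        rw [hPdef, show qs - 1 = (qs - 2) + 1 by ring, Real.rpow_add ha, Real.rpow_one]
      have hbQ : b ^ (qs - 1) = Q * b := by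
        rw [hQdef, show qs - 1 = (qs - 2) + 1 by ring, Real.rpow_add hb0, Real.rpow_one]
      have hs0 : (0:ℝ) ≤ (b - a) / a := div_nonneg (by linarith) ha.le
      have h1s : 1 + (b - a) / a = b / a := by field_simp; ring
      -- Bernoulli A
      have hA : 1 + (qs - 1) * ((b - a) / a) ≤ (1 + (b - a) / a) ^ (qs - 1) :=
        one_add_mul_self_le_rpow_one_add (by linarith) (by linarith)
      rw [h1s, Real.div_rpow hb0.le ha.le] at hA
      have hA2 : (1 + (qs - 1) * ((b - a) / a)) * a ^ (qs - 1) ≤ b ^ (qs - 1) :=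
        (le_div_iff₀ (Real.rpow_pos_of_pos ha _)).mp hA
      have hA3 : P * a + (qs - 1) * (b - a) * P ≤ Q * b := by
        rw [haP, hbQ] at hA2
        have : (1 + (qs - 1) * ((b - a) / a)) * (P * a) =
            P * a + (qs - 1) * (b - a) * P := by field_simp
        linarith [this ▸ hA2]
      -- Bernoulli B
      have hB : (1 + (b - a) / a) ^ (qs - 2) ≤ 1 + (qs - 2) * ((b - a) / a) :=
        rpow_one_add_le_one_add_mul_self (by linarith) (by linarith) (by linarith)
      rw [h1s, Real.div_rpow hb0.le ha.le] at hB
      have hB2 : Q ≤ (1 + (qs - 2) * ((b - a) / a)) * P :=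
        (div_le_iff₀ hP).mp hB
      have hB3 : Q * a ≤ P * a + (qs - 2) * (b - a) * P := by
        have : (1 + (qs - 2) * ((b - a) / a)) * P * a =
            P * a + (qs - 2) * (b - a) * P := by field_simp
        nlinarith
      -- combine
      have heq' : b + Q * b = 2 * a + P * a := by rw [← haP, ← hbQ]; exact heq
      have hAfin : (qs - 1) * (b - a) * P ≤ 2 * a - b := by nlinarith
      -- goal : (qs-1)*(Q - P) ≤ 1
      have h2ab : 0 ≤ 2 * a - b := by linarith
      have hstep : (qs - 1) * (Q - P) * a ≤ a := by nlinarith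
      have := (mul_le_mul_iff_of_pos_right ha).mp (by linarith [hstep] : (qs - 1) * (Q - P) * a ≤ 1 * a)
      linarith
  · rcases le_or_gt 2 qs with h2 | h2
    · have : a ^ (qs - 2) ≤ b ^ (qs - 2) :=
        Real.rpow_le_rpow ha.le hab.le (by linarith)
      linarith
    · have h1 : (2 * a) ^ (qs - 2) ≤ b ^ (qs - 2) :=
        Real.rpow_le_rpow_of_nonpos hb0 hb2 (by linarith)
      have h2' : (2 * a) ^ (qs - 2) = 2 ^ (qs - 2) * a ^ (qs - 2) :=
        Real.mul_rpow (by norm_num) ha.le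
      have h3 : (2:ℝ)⁻¹ ≤ 2 ^ (qs - 2) := by
        have := (Real.rpow_le_rpow_left_iff (by norm_num : (1:ℝ) < 2)).mpr
          (by linarith : (-1:ℝ) ≤ qs - 2)
        rwa [Real.rpow_neg_one] at this
      nlinarith

noncomputable def FF (qs : ℝ) (p : ℝ) : ℝ := gg qs p - p

lemma abs_facts (hqs : 1 < qs) {p : ℝ} (hp : p ≠ 0) :
    |p| < |gg qs p| ∧ |gg qs p| ≤ 2 * |p| ∧
      |gg qs p| + |gg qs p| ^ (qs - 1) = 2 * |p| + |p| ^ (qs - 1) := by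
  have main : ∀ p : ℝ, 0 < p → p < gg qs p ∧ gg qs p ≤ 2 * p ∧
      gg qs p + (gg qs p) ^ (qs - 1) = 2 * p + p ^ (qs - 1) := by
    intro p hp
    refine ⟨gg_gt hqs hp, gg_le_two_mul hqs hp, ?_⟩
    have h1 := hh_gg hqs p
    rw [hh_of_pos hp, hh_of_pos (lt_trans hp (gg_gt hqs hp))] at h1
    linarith
  rcases hp.lt_or_gt with h | h
  · have hpos : 0 < -p := by linarith
    obtain ⟨h1, h2, h3⟩ := main (-p) hpos
    rw [gg_neg hqs] at h1 h2 h3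
    have hgg : gg qs p < 0 := by linarith
    rw [abs_of_neg h, abs_of_neg hgg]
    exact ⟨h1, h2, h3⟩
  · obtain ⟨h1, h2, h3⟩ := main p h
    have hgg : 0 < gg qs p := lt_trans h h1
    rw [abs_of_pos h, abs_of_pos hgg]
    exact ⟨h1, h2, h3⟩

lemma FF_hasDerivAt (hqs : 1 < qs) {p : ℝ} (hp : p ≠ 0) :
    HasDerivAt (FF qs)
      ((1 + (qs - 1) * |gg qs p| ^ (qs - 2))⁻¹ * (2 + (qs - 1) * |p| ^ (qs - 2)) - 1) p :=
  (gg_hasDerivAt hqs hp).sub (hasDerivAt_id p)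

lemma FF_deriv_bounds (hqs : 1 < qs) (hqs3 : qs ≤ 3) {p : ℝ} (hp : p ≠ 0) :
    0 ≤ deriv (FF qs) p ∧ deriv (FF qs) p ≤ 1 := by
  rw [(FF_hasDerivAt hqs hp).deriv]
  obtain ⟨h1, h2, h3⟩ := abs_facts hqs hp
  have ha : 0 < |p| := abs_pos.mpr hp
  obtain ⟨k1, k2⟩ := key hqs hqs3 ha h1 h2 h3
  set A := |p| ^ (qs - 2)
  set B := |gg qs p| ^ (qs - 2)
  have hx : (0:ℝ) < 1 + (qs - 1) * B := by
    have : (0:ℝ) ≤ B := Real.rpow_nonneg (abs_nonneg _) _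
    nlinarith
  have hA0 : (0:ℝ) ≤ A := Real.rpow_nonneg (abs_nonneg _) _
  rw [← div_eq_inv_mul]
  constructor
  · rw [sub_nonneg, le_div_iff₀ hx]
    nlinarith
  · rw [sub_le_iff_le_add, div_le_iff₀ hx]
    nlinarith

lemma gg_continuous (hqs : 1 < qs) : Continuous (gg qs) :=
  (invFun_hh_continuous hqs).comp ((hh_continuous hqs).add continuous_id)

lemma FF_monotone (hqs : 1 < qs) (hqs3 : qs ≤ 3) : Monotone (FF qs) := by
  have hcont : Continuous (FF qs) := (gg_continuous hqs).sub continuous_id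
  have hmono : ∀ D : Set ℝ, Convex ℝ D → interior D ⊆ {x : ℝ | x ≠ 0} →
      MonotoneOn (FF qs) D := by
    intro D hD hsub
    apply monotoneOn_of_deriv_nonneg hD hcont.continuousOn
    · intro x hx
      exact ((FF_hasDerivAt hqs (hsub hx)).differentiableAt).differentiableWithinAt
    · intro x hx
      exact (FF_deriv_bounds hqs hqs3 (hsub hx)).1
  have hIci : MonotoneOn (FF qs) (Set.Ici 0) := by
    apply hmono _ (convex_Ici 0)
    rw [interior_Ici]
    intro x hx
    exact ne_of_gt hx
  have hIic : MonotoneOn (FF qs) (Set.Iic 0) := by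
    apply hmono _ (convex_Iic 0)
    rw [interior_Iic]
    intro x hx
    exact ne_of_lt hx
  intro x y hxy
  rcases le_total 0 x with hx | hx
  · exact hIci hx (le_trans hx hxy) hxy
  · rcases le_total y 0 with hy | hy
    · exact hIic hx hy hxy
    · exact le_trans (hIic hx Set.self_mem_Iic hx) (hIci Set.self_mem_Ici hy hy)

lemma GG_monotone (hqs : 1 < qs) (hqs3 : qs ≤ 3) : Monotone (fun p => p - FF qs p) := by
  have hcont : Continuous (fun p : ℝ => p - FF qs p) :=
    continuous_id.sub ((gg_continuous hqs).sub continuous_id)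
  have hder : ∀ x : ℝ, x ≠ 0 → HasDerivAt (fun p : ℝ => p - FF qs p)
      (1 - ((1 + (qs - 1) * |gg qs x| ^ (qs - 2))⁻¹ * (2 + (qs - 1) * |x| ^ (qs - 2)) - 1)) x :=
    fun x hx => (hasDerivAt_id x).sub (FF_hasDerivAt hqs hx)
  have hdnn : ∀ x : ℝ, x ≠ 0 → 0 ≤ deriv (fun p : ℝ => p - FF qs p) x := by
    intro x hx
    rw [(hder x hx).deriv]
    have h2 := (FF_deriv_bounds hqs hqs3 hx).2
    rw [(FF_hasDerivAt hqs hx).deriv] at h2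
    linarith
  have hmono : ∀ D : Set ℝ, Convex ℝ D → interior D ⊆ {x : ℝ | x ≠ 0} →
      MonotoneOn (fun p : ℝ => p - FF qs p) D := by
    intro D hD hsub
    apply monotoneOn_of_deriv_nonneg hD hcont.continuousOn
    · intro x hx
      exact ((hder x (hsub hx)).differentiableAt).differentiableWithinAt
    · intro x hx
      exact hdnn x (hsub hx)
  have hIci := hmono _ (convex_Ici 0) (by rw [interior_Ici]; exact fun x hx => ne_of_gt hx)
  have hIic := hmono _ (convex_Iic 0) (by rw [interior_Iic]; exact fun x hx => ne_of_lt hx)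
  intro x y hxy
  rcases le_total 0 x with hx | hx
  · exact hIci hx (le_trans hx hxy) hxy
  · rcases le_total y 0 with hy | hy
    · exact hIic hx hy hxy
    · exact le_trans (hIic hx Set.self_mem_Iic hx) (hIci Set.self_mem_Ici hy hy)

end Stmt17

/-- For `1 < q* ≤ 3` and `F p = h_{q*}⁻¹(h_{q*}(p) + p) - p` with
`h_{q*}(p) = p + |p|^{q*-1} sgn p`: `0 ≤ F'(p) ≤ 1` for all `p ≠ 0`, and
consequently `((p₁ - F p₁) - (p₂ - F p₂)) (F p₁ - F p₂) ≥ 0` for all `p₁ p₂`. -/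
theorem stmt_17 (qs : ℝ) (hqs1 : 1 < qs) (hqs3 : qs ≤ 3) :
    letI h := fun p : ℝ => p + |p| ^ (qs - 1) * Real.sign p
    letI F := fun p : ℝ => Function.invFun h (h p + p) - p
    (∀ p : ℝ, p ≠ 0 → 0 ≤ deriv F p ∧ deriv F p ≤ 1) ∧
    ∀ p₁ p₂ : ℝ, 0 ≤ ((p₁ - F p₁) - (p₂ - F p₂)) * (F p₁ - F p₂) := by
  refine ⟨?_, ?_⟩
  · intro p hp
    exact Stmt17.FF_deriv_bounds hqs1 hqs3 hp
  · intro p₁ p₂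
    have hF := Stmt17.FF_monotone hqs1 hqs3
    have hG := Stmt17.GG_monotone hqs1 hqs3
    show 0 ≤ ((p₁ - Stmt17.FF qs p₁) - (p₂ - Stmt17.FF qs p₂)) *
      (Stmt17.FF qs p₁ - Stmt17.FF qs p₂)
    rcases le_total p₁ p₂ with h | h
    · have h1 := hF h
      have h2 := hG h
      dsimp at h2
      have ha : ((p₁ - Stmt17.FF qs p₁) - (p₂ - Stmt17.FF qs p₂)) ≤ 0 := by linarith
      have hb : Stmt17.FF qs p₁ - Stmt17.FF qs p₂ ≤ 0 := by linarith
      nlinarith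
    · have h1 := hF h
      have h2 := hG h
      dsimp at h2
      exact mul_nonneg (by linarith) (by linarith)
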